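/- arXiv:2301.09249 — 2 statements merged into one kernel-verified Lean document; each statement's English description precedes it below -/
import Mathlib

section
/- Let μ_S and μ_T be probability measures on a measurable space X, let ℓ_c and ℓ_r be loss functions (jointly measurable, nonnegative, symmetric, satisfying the pointwise triangle inequality, bounded by J ≥ 0), let F and G be sets of measurable functions X → ℝ, and let h_c, h_r : X → ℝ be measurable labeling functions. Define the risk R_μ(f, g) = (1/2) (L^{ℓ_c}_μ(f, h_c) + L^{ℓ_r}_μ(g, h_r)) and the discrepancy disc(μ_S, μ_T) = ⨆_{f, f' ∈ F} |L^{ℓ_c}_{μ_S}(f, f') − L^{ℓ_c}_{μ_T}(f, f')| + ⨆_{g, g' ∈ G} |L^{ℓ_r}_{μ_S}(g, g') − L^{ℓ_r}_{μ_T}(g, g')|. Then for every f, f* ∈ F and g, g* ∈ G, R_{μ_T}(f, g) ≤ R_{μ_S}(f, g) + (1/2) disc(μ_S, μ_T) + λ*, where λ* = R_{μ_T}(f*, g*) + R_{μ_S}(f*, g*). -/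
open MeasureTheory

/-- Expected loss of a pair of functions under a measure. -/
noncomputable def expLoss {X : Type*} [MeasurableSpace X] (ℓ : ℝ → ℝ → ℝ)
    (μ : Measure X) (f f' : X → ℝ) : ℝ := ∫ x, ℓ (f x) (f' x) ∂μ

/-- The discrepancy distance between two measures over one hypothesis class. -/
noncomputable def discOne {X : Type*} [MeasurableSpace X] (ℓ : ℝ → ℝ → ℝ)
    (F : Set (X → ℝ)) (μ ν : Measure X) : ℝ :=
  sSup {d : ℝ | ∃ f₁ ∈ F, ∃ f₂ ∈ F, d = |expLoss ℓ μ f₁ f₂ - expLoss ℓ ν f₁ f₂|}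

/-- The discrepancy of Definition 2.2: classification-class discrepancy plus
regression-class discrepancy. -/
noncomputable def disc {X : Type*} [MeasurableSpace X] (ℓc ℓr : ℝ → ℝ → ℝ)
    (F G : Set (X → ℝ)) (μ ν : Measure X) : ℝ :=
  discOne ℓc F μ ν + discOne ℓr G μ ν

/-- The risk of a classifier–regressor pair `(f, g)` under labeling functions
`(hc, hr)`. -/
noncomputable def risk {X : Type*} [MeasurableSpace X] (ℓc ℓr : ℝ → ℝ → ℝ)
    (hc hr : X → ℝ) (μ : Measure X) (f g : X → ℝ) : ℝ :=
  (1 / 2) * (expLoss ℓc μ f hc + expLoss ℓr μ g hr)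

lemma integrable_loss {X : Type*} [MeasurableSpace X] (ℓ : ℝ → ℝ → ℝ)
    (μ : Measure X) [IsProbabilityMeasure μ] (J : ℝ)
    (hmeas : Measurable (Function.uncurry ℓ)) (hnn : ∀ a b, 0 ≤ ℓ a b)
    (hb : ∀ a b, ℓ a b ≤ J) {f f' : X → ℝ} (hf : Measurable f) (hf' : Measurable f') :
    Integrable (fun x => ℓ (f x) (f' x)) μ := by
  have hm : Measurable fun x => ℓ (f x) (f' x) := hmeas.comp (hf.prodMk hf')
  refine ⟨hm.aestronglyMeasurable, ?_⟩
  apply HasFiniteIntegral.of_bounded (C := J)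
  filter_upwards with x
  rw [Real.norm_eq_abs, abs_of_nonneg (hnn _ _)]
  exact hb _ _

lemma expLoss_nonneg {X : Type*} [MeasurableSpace X] (ℓ : ℝ → ℝ → ℝ)
    (μ : Measure X) (hnn : ∀ a b, 0 ≤ ℓ a b) (f f' : X → ℝ) :
    0 ≤ expLoss ℓ μ f f' :=
  integral_nonneg fun x => hnn _ _

lemma expLoss_le {X : Type*} [MeasurableSpace X] (ℓ : ℝ → ℝ → ℝ)
    (μ : Measure X) [IsProbabilityMeasure μ] (J : ℝ)
    (hmeas : Measurable (Function.uncurry ℓ)) (hnn : ∀ a b, 0 ≤ ℓ a b)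
    (hb : ∀ a b, ℓ a b ≤ J) {f f' : X → ℝ} (hf : Measurable f) (hf' : Measurable f') :
    expLoss ℓ μ f f' ≤ J := by
  have := integral_mono (integrable_loss ℓ μ J hmeas hnn hb hf hf')
    (integrable_const J) (fun x => hb (f x) (f' x))
  simpa [expLoss] using this

lemma expLoss_symm {X : Type*} [MeasurableSpace X] (ℓ : ℝ → ℝ → ℝ)
    (μ : Measure X) (hsymm : ∀ a b, ℓ a b = ℓ b a) (f f' : X → ℝ) :
    expLoss ℓ μ f f' = expLoss ℓ μ f' f := by
  unfold expLoss; simp_rw [hsymm]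

lemma expLoss_triangle {X : Type*} [MeasurableSpace X] (ℓ : ℝ → ℝ → ℝ)
    (μ : Measure X) [IsProbabilityMeasure μ] (J : ℝ)
    (hmeas : Measurable (Function.uncurry ℓ)) (hnn : ∀ a b, 0 ≤ ℓ a b)
    (hb : ∀ a b, ℓ a b ≤ J) (htri : ∀ a b c, ℓ a c ≤ ℓ a b + ℓ b c)
    {f f' h : X → ℝ} (hf : Measurable f) (hf' : Measurable f') (hh : Measurable h) :
    expLoss ℓ μ f h ≤ expLoss ℓ μ f f' + expLoss ℓ μ f' h := by
  have := integral_mono (integrable_loss ℓ μ J hmeas hnn hb hf hh)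
    ((integrable_loss ℓ μ J hmeas hnn hb hf hf').add
      (integrable_loss ℓ μ J hmeas hnn hb hf' hh))
    (fun x => htri (f x) (f' x) (h x))
  simpa [expLoss, integral_add (integrable_loss ℓ μ J hmeas hnn hb hf hf')
    (integrable_loss ℓ μ J hmeas hnn hb hf' hh)] using this

lemma discOne_bound {X : Type*} [MeasurableSpace X] (ℓ : ℝ → ℝ → ℝ)
    (F : Set (X → ℝ)) (μ ν : Measure X) [IsProbabilityMeasure μ] [IsProbabilityMeasure ν]
    (J : ℝ) (hJ : 0 ≤ J)
    (hmeas : Measurable (Function.uncurry ℓ)) (hnn : ∀ a b, 0 ≤ ℓ a b)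
    (hb : ∀ a b, ℓ a b ≤ J) (hF : ∀ f ∈ F, Measurable f)
    {f₁ f₂ : X → ℝ} (h1 : f₁ ∈ F) (h2 : f₂ ∈ F) :
    |expLoss ℓ μ f₁ f₂ - expLoss ℓ ν f₁ f₂| ≤ discOne ℓ F μ ν := by
  apply le_csSup
  · refine ⟨J, ?_⟩
    rintro d ⟨g₁, hg₁, g₂, hg₂, rfl⟩
    rw [abs_sub_le_iff]
    constructor
    · linarith [expLoss_le ℓ μ J hmeas hnn hb (hF _ hg₁) (hF _ hg₂),
        expLoss_nonneg ℓ ν hnn g₁ g₂]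
    · linarith [expLoss_le ℓ ν J hmeas hnn hb (hF _ hg₁) (hF _ hg₂),
        expLoss_nonneg ℓ μ hnn g₁ g₂]
  · exact ⟨f₁, h1, f₂, h2, rfl⟩

lemma one_side {X : Type*} [MeasurableSpace X]
    (μS μT : Measure X) [IsProbabilityMeasure μS] [IsProbabilityMeasure μT]
    (ℓ : ℝ → ℝ → ℝ) (J : ℝ) (hJ : 0 ≤ J)
    (hmeas : Measurable (Function.uncurry ℓ)) (hnn : ∀ a b, 0 ≤ ℓ a b)
    (hsymm : ∀ a b, ℓ a b = ℓ b a) (htri : ∀ a b c, ℓ a c ≤ ℓ a b + ℓ b c)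
    (hb : ∀ a b, ℓ a b ≤ J)
    (F : Set (X → ℝ)) (hF : ∀ f ∈ F, Measurable f)
    (h : X → ℝ) (hh : Measurable h)
    {f fstar : X → ℝ} (hfF : f ∈ F) (hfs : fstar ∈ F) :
    expLoss ℓ μT f h ≤ expLoss ℓ μS f h + discOne ℓ F μS μT +
      (expLoss ℓ μT fstar h + expLoss ℓ μS fstar h) := by
  have hfm := hF f hfF
  have hfsm := hF fstar hfs
  have t1 : expLoss ℓ μT f h ≤ expLoss ℓ μT f fstar + expLoss ℓ μT fstar h :=
    expLoss_triangle ℓ μT J hmeas hnn hb htri hfm hfsm hh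
  have t2 : expLoss ℓ μT f fstar ≤ expLoss ℓ μS f fstar + discOne ℓ F μS μT := by
    have := discOne_bound ℓ F μS μT J hJ hmeas hnn hb hF hfF hfs
    nlinarith [abs_sub_abs_le_abs_sub (expLoss ℓ μS f fstar) (expLoss ℓ μT f fstar),
      neg_abs_le (expLoss ℓ μS f fstar - expLoss ℓ μT f fstar),
      discOne_bound ℓ F μS μT J hJ hmeas hnn hb hF hfF hfs]
  have t3 : expLoss ℓ μS f fstar ≤ expLoss ℓ μS f h + expLoss ℓ μS fstar h := by
    have := expLoss_triangle ℓ μS J hmeas hnn hb htri hfm hh hfsm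
    rw [expLoss_symm ℓ μS hsymm h fstar] at this
    linarith
  linarith

/-- Distribution-level form of Theorem 2.1: the test risk is bounded by the
selected-set risk, half the discrepancy, and the joint risk `λ*` of the optimal
hypotheses. -/
theorem risk_transfer {X : Type*} [MeasurableSpace X]
    (μS μT : Measure X) [IsProbabilityMeasure μS] [IsProbabilityMeasure μT]
    (ℓc ℓr : ℝ → ℝ → ℝ) (J : ℝ) (hJ : 0 ≤ J)
    (hmeasc : Measurable (Function.uncurry ℓc))
    (hmeasr : Measurable (Function.uncurry ℓr))
    (hnonnegc : ∀ a b, 0 ≤ ℓc a b) (hnonnegr : ∀ a b, 0 ≤ ℓr a b)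
    (hsymmc : ∀ a b, ℓc a b = ℓc b a) (hsymmr : ∀ a b, ℓr a b = ℓr b a)
    (htric : ∀ a b c, ℓc a c ≤ ℓc a b + ℓc b c)
    (htrir : ∀ a b c, ℓr a c ≤ ℓr a b + ℓr b c)
    (hboundc : ∀ a b, ℓc a b ≤ J) (hboundr : ∀ a b, ℓr a b ≤ J)
    (F G : Set (X → ℝ)) (hF : ∀ f ∈ F, Measurable f) (hG : ∀ g ∈ G, Measurable g)
    (hc hr : X → ℝ) (hhc : Measurable hc) (hhr : Measurable hr)
    (f : X → ℝ) (hfF : f ∈ F) (fstar : X → ℝ) (hfstarF : fstar ∈ F)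
    (g : X → ℝ) (hgG : g ∈ G) (gstar : X → ℝ) (hgstarG : gstar ∈ G) :
    risk ℓc ℓr hc hr μT f g ≤
      risk ℓc ℓr hc hr μS f g + (1 / 2) * disc ℓc ℓr F G μS μT +
        (risk ℓc ℓr hc hr μT fstar gstar + risk ℓc ℓr hc hr μS fstar gstar) := by
  unfold risk disc
  have Hc := one_side μS μT ℓc J hJ hmeasc hnonnegc hsymmc htric hboundc F hF hc hhc hfF hfstarF
  have Hr := one_side μS μT ℓr J hJ hmeasr hnonnegr hsymmr htrir hboundr G hG hr hhr hgG hgstarG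
  linarith
end

section
/- Let μ_S and μ_T be probability measures on a measurable space X and let ℓ be a loss function (jointly measurable, nonnegative, symmetric, satisfying the pointwise triangle inequality, bounded by J ≥ 0). Then for all measurable functions f, f*, h : X → ℝ, L_{μ_T}(f, h) ≤ L_{μ_S}(f, h) + L_{μ_S}(f*, h) + L_{μ_T}(f*, h) + |L_{μ_T}(f, f*) − L_{μ_S}(f, f*)|. -/
open MeasureTheory

lemma expLoss_integrable {X : Type*} [MeasurableSpace X]
    (μ : Measure X) [IsFiniteMeasure μ]
    (ℓ : ℝ → ℝ → ℝ) (J : ℝ)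
    (hmeas : Measurable (Function.uncurry ℓ))
    (hnonneg : ∀ a b, 0 ≤ ℓ a b)
    (hbound : ∀ a b, ℓ a b ≤ J)
    (g g' : X → ℝ) (hg : Measurable g) (hg' : Measurable g') :
    Integrable (fun x => ℓ (g x) (g' x)) μ := by
  have hm : Measurable (fun x => ℓ (g x) (g' x)) := by
    exact hmeas.comp (hg.prodMk hg')
  refine ⟨hm.aestronglyMeasurable, ?_⟩
  apply HasFiniteIntegral.of_bounded (C := J)
  filter_upwards with x
  rw [Real.norm_eq_abs, abs_of_nonneg (hnonneg _ _)]
  exact hbound _ _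

/-- Core chain-of-triangle-inequalities step in the proof of Theorem 2.1. -/
theorem expLoss_transfer_bound {X : Type*} [MeasurableSpace X]
    (μS μT : Measure X) [IsProbabilityMeasure μS] [IsProbabilityMeasure μT]
    (ℓ : ℝ → ℝ → ℝ) (J : ℝ) (hJ : 0 ≤ J)
    (hmeas : Measurable (Function.uncurry ℓ))
    (hnonneg : ∀ a b, 0 ≤ ℓ a b)
    (hsymm : ∀ a b, ℓ a b = ℓ b a)
    (htri : ∀ a b c, ℓ a c ≤ ℓ a b + ℓ b c)
    (hbound : ∀ a b, ℓ a b ≤ J)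
    (f fstar h : X → ℝ) (hf : Measurable f) (hfstar : Measurable fstar)
    (hh : Measurable h) :
    expLoss ℓ μT f h ≤
      expLoss ℓ μS f h + expLoss ℓ μS fstar h + expLoss ℓ μT fstar h +
        |expLoss ℓ μT f fstar - expLoss ℓ μS f fstar| := by
  have I := fun (μ : Measure X) (hμ : IsFiniteMeasure μ) g g' hg hg' =>
    expLoss_integrable μ ℓ J hmeas hnonneg hbound g g' hg hg'
  have iTffs := I μT inferInstance f fstar hf hfstar
  have iTfsh := I μT inferInstance fstar h hfstar hh
  have iSfh := I μS inferInstance f h hf hh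
  have iSfsh := I μS inferInstance fstar h hfstar hh
  have iSffs := I μS inferInstance f fstar hf hfstar
  -- Step 1: L_T(f,h) ≤ L_T(f,f*) + L_T(f*,h)
  have h1 : expLoss ℓ μT f h ≤ expLoss ℓ μT f fstar + expLoss ℓ μT fstar h := by
    rw [expLoss, expLoss, expLoss, ← integral_add iTffs iTfsh]
    exact integral_mono (I μT inferInstance f h hf hh) (iTffs.add iTfsh)
      (fun x => htri _ _ _)
  -- Step 2: L_T(f,f*) ≤ L_S(f,f*) + |L_T(f,f*) - L_S(f,f*)|
  have h2 : expLoss ℓ μT f fstar ≤ expLoss ℓ μS f fstar +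
      |expLoss ℓ μT f fstar - expLoss ℓ μS f fstar| := by
    have := le_abs_self (expLoss ℓ μT f fstar - expLoss ℓ μS f fstar)
    linarith
  -- Step 3: L_S(f,f*) ≤ L_S(f,h) + L_S(f*,h)
  have h3 : expLoss ℓ μS f fstar ≤ expLoss ℓ μS f h + expLoss ℓ μS fstar h := by
    rw [expLoss, expLoss, expLoss, ← integral_add iSfh iSfsh]
    refine integral_mono iSffs (iSfh.add iSfsh) (fun x => ?_)
    calc ℓ (f x) (fstar x) ≤ ℓ (f x) (h x) + ℓ (h x) (fstar x) := htri _ _ _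
      _ = ℓ (f x) (h x) + ℓ (fstar x) (h x) := by rw [hsymm (h x)]
  linarith
end
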